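/- Let ρ ∈ ℂ be nonzero and let A = ℂ_ρ[x,y,z] be the quotient of the free ℂ-algebra on x, y, z by the two-sided ideal generated by xy − ρyx, yz − ρzy, zx − ρxz. Then A is finitely generated as a module over its center Z(A) if and only if ρ is a root of unity. -/

import Mathlib

/-- The generators of the free algebra on three variables. -/
noncomputable def freeGen (i : Fin 3) : FreeAlgebra ℂ (Fin 3) := FreeAlgebra.ι ℂ i

/-- The defining relations of the quantum affine 3-space `ℂ_ρ[x,y,z]`:
`xy = ρ yx`, `yz = ρ zy`, `zx = ρ xz`. -/
inductive QuantumRel (ρ : ℂ) : FreeAlgebra ℂ (Fin 3) → FreeAlgebra ℂ (Fin 3) → Prop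
  | xy : QuantumRel ρ (freeGen 0 * freeGen 1) (ρ • (freeGen 1 * freeGen 0))
  | yz : QuantumRel ρ (freeGen 1 * freeGen 2) (ρ • (freeGen 2 * freeGen 1))
  | zx : QuantumRel ρ (freeGen 2 * freeGen 0) (ρ • (freeGen 0 * freeGen 2))

/-- The quantum affine 3-space `ℂ_ρ[x,y,z]`. -/
noncomputable abbrev QuantumAlg (ρ : ℂ) := RingQuot (QuantumRel ρ)

/-- The image of `x` in `ℂ_ρ[x,y,z]`. -/
noncomputable def qX (ρ : ℂ) : QuantumAlg ρ := RingQuot.mkAlgHom ℂ (QuantumRel ρ) (freeGen 0)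

/-- The image of `y` in `ℂ_ρ[x,y,z]`. -/
noncomputable def qY (ρ : ℂ) : QuantumAlg ρ := RingQuot.mkAlgHom ℂ (QuantumRel ρ) (freeGen 1)

/-- The image of `z` in `ℂ_ρ[x,y,z]`. -/
noncomputable def qZ (ρ : ℂ) : QuantumAlg ρ := RingQuot.mkAlgHom ℂ (QuantumRel ρ) (freeGen 2)


lemma rel_xy (ρ : ℂ) : qX ρ * qY ρ = ρ • (qY ρ * qX ρ) := by
  rw [qX, qY, ← map_mul, ← map_mul, ← map_smul]
  exact RingQuot.mkAlgHom_rel ℂ QuantumRel.xy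

lemma rel_yz (ρ : ℂ) : qY ρ * qZ ρ = ρ • (qZ ρ * qY ρ) := by
  rw [qY, qZ, ← map_mul, ← map_mul, ← map_smul]
  exact RingQuot.mkAlgHom_rel ℂ QuantumRel.yz

lemma rel_zx (ρ : ℂ) : qZ ρ * qX ρ = ρ • (qX ρ * qZ ρ) := by
  rw [qZ, qX, ← map_mul, ← map_mul, ← map_smul]
  exact RingQuot.mkAlgHom_rel ℂ QuantumRel.zx

lemma adjoin_top (ρ : ℂ) : Algebra.adjoin ℂ {qX ρ, qY ρ, qZ ρ} = ⊤ := by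
  have h1 : Set.range (freeGen) = {freeGen 0, freeGen 1, freeGen 2} := by
    ext a; simp [Set.mem_range]
    constructor
    · rintro ⟨i, rfl⟩; fin_cases i <;> simp
    · rintro (rfl|rfl|rfl) <;> [exact ⟨0, rfl⟩; exact ⟨1, rfl⟩; exact ⟨2, rfl⟩]
  have h2 : Algebra.adjoin ℂ (Set.range freeGen) = ⊤ := by
    have := FreeAlgebra.adjoin_range_ι (R := ℂ) (X := Fin 3)
    convert this using 2
    rfl
  have := AlgHom.map_adjoin (RingQuot.mkAlgHom ℂ (QuantumRel ρ)) (Set.range freeGen)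
  rw [h2, Algebra.map_top, (AlgHom.range_eq_top _).2 (RingQuot.mkAlgHom_surjective ℂ _), h1] at this
  rw [this]
  congr 1
  simp only [Set.image_insert_eq, Set.image_singleton]
  rfl
section
variable {A : Type*} [Ring A] [Algebra ℂ A]

lemma powLeftComm {ρ : ℂ} {a b : A} (h : a * b = ρ • (b * a)) :
    ∀ n : ℕ, a ^ n * b = ρ ^ n • (b * a ^ n)
  | 0 => by simp
  | (n+1) => by
    have ih := powLeftComm h n
    calc a ^ (n+1) * b = a ^ n * (a * b) := by rw [pow_succ, mul_assoc]
    _ = ρ • (a ^ n * b * a) := by rw [h, mul_smul_comm, mul_assoc]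
    _ = ρ • (ρ ^ n • (b * a ^ n * a)) := by rw [ih, smul_mul_assoc]
    _ = ρ ^ (n+1) • (b * a ^ (n+1)) := by
        rw [smul_smul, ← pow_succ', mul_assoc, ← pow_succ]

lemma powRightComm {ρ : ℂ} {a b : A} (h : a * b = ρ • (b * a)) :
    ∀ n : ℕ, a * b ^ n = ρ ^ n • (b ^ n * a)
  | 0 => by simp
  | (n+1) => by
    have ih := powRightComm h n
    calc a * b ^ (n+1) = (a * b ^ n) * b := by rw [pow_succ, mul_assoc]
    _ = ρ ^ n • (b ^ n * (a * b)) := by rw [ih, smul_mul_assoc, mul_assoc]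
    _ = ρ ^ n • (b ^ n * (ρ • (b * a))) := by rw [h]
    _ = ρ ^ (n+1) • (b ^ (n+1) * a) := by
        rw [mul_smul_comm, smul_smul, ← pow_succ, ← mul_assoc, ← pow_succ]
end

lemma mem_center_of (ρ : ℂ) (g : QuantumAlg ρ)
    (hx : g * qX ρ = qX ρ * g) (hy : g * qY ρ = qY ρ * g) (hz : g * qZ ρ = qZ ρ * g) :
    g ∈ Subalgebra.center ℂ (QuantumAlg ρ) := by
  rw [Subalgebra.mem_center_iff]
  intro b
  have hb : b ∈ Algebra.adjoin ℂ {qX ρ, qY ρ, qZ ρ} := by rw [adjoin_top]; trivial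
  induction hb using Algebra.adjoin_induction with
  | mem s hs =>
      rcases hs with rfl | rfl | rfl
      · exact hx.symm
      · exact hy.symm
      · exact hz.symm
  | algebraMap r => exact (Algebra.commutes r g)
  | add u v hu hv h1 h2 => rw [add_mul, mul_add, h1, h2]
  | mul u v hu hv h1 h2 => rw [mul_assoc, h2, ← mul_assoc, h1, mul_assoc]

lemma qX_pow_center (ρ : ℂ) (k : ℕ) (hk : ρ ^ k = 1) :
    qX ρ ^ k ∈ Subalgebra.center ℂ (QuantumAlg ρ) := by
  apply mem_center_of
  · rw [← pow_succ, ← pow_succ']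
  · rw [powLeftComm (rel_xy ρ) k, hk, one_smul]
  · rw [powRightComm (rel_zx ρ) k, hk, one_smul]

lemma qY_pow_center (ρ : ℂ) (k : ℕ) (hk : ρ ^ k = 1) :
    qY ρ ^ k ∈ Subalgebra.center ℂ (QuantumAlg ρ) := by
  apply mem_center_of
  · rw [powRightComm (rel_xy ρ) k, hk, one_smul]
  · rw [← pow_succ, ← pow_succ']
  · rw [powLeftComm (rel_yz ρ) k, hk, one_smul]

lemma qZ_pow_center (ρ : ℂ) (k : ℕ) (hk : ρ ^ k = 1) :
    qZ ρ ^ k ∈ Subalgebra.center ℂ (QuantumAlg ρ) := by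
  apply mem_center_of
  · rw [powLeftComm (rel_zx ρ) k, hk, one_smul]
  · rw [powRightComm (rel_yz ρ) k, hk, one_smul]
  · rw [← pow_succ, ← pow_succ']

section Backward
variable (ρ : ℂ)

lemma rel_yx (hρ : ρ ≠ 0) : qY ρ * qX ρ = ρ⁻¹ • (qX ρ * qY ρ) := by
  rw [rel_xy, smul_smul, inv_mul_cancel₀ hρ, one_smul]

lemma rel_zy (hρ : ρ ≠ 0) : qZ ρ * qY ρ = ρ⁻¹ • (qY ρ * qZ ρ) := by
  rw [rel_yz, smul_smul, inv_mul_cancel₀ hρ, one_smul]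

lemma smul_center (w : QuantumAlg ρ) (hw : w ∈ Subalgebra.center ℂ (QuantumAlg ρ))
    (v : QuantumAlg ρ) :
    (⟨w, hw⟩ : Subalgebra.center ℂ (QuantumAlg ρ)) • v = w * v := rfl

lemma mono_mul_X (hρ : ρ ≠ 0) (a b c : ℕ) :
    (qX ρ ^ a * (qY ρ ^ b * qZ ρ ^ c)) * qX ρ
      = (ρ ^ c * (ρ⁻¹) ^ b) • (qX ρ ^ (a+1) * (qY ρ ^ b * qZ ρ ^ c)) := by
  have h1 : qZ ρ ^ c * qX ρ = ρ ^ c • (qX ρ * qZ ρ ^ c) := powLeftComm (rel_zx ρ) c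
  have h2 : qY ρ ^ b * qX ρ = (ρ⁻¹) ^ b • (qX ρ * qY ρ ^ b) := powLeftComm (rel_yx ρ hρ) b
  rw [mul_assoc, mul_assoc, h1, mul_smul_comm, mul_smul_comm, ← mul_assoc (qY ρ ^ b), h2,
    smul_mul_assoc, mul_smul_comm, smul_smul]
  rw [mul_assoc (qX ρ), ← mul_assoc (qX ρ ^ a) (qX ρ), ← pow_succ]

lemma mono_mul_Y (hρ : ρ ≠ 0) (a b c : ℕ) :
    (qX ρ ^ a * (qY ρ ^ b * qZ ρ ^ c)) * qY ρ
      = ((ρ⁻¹) ^ c) • (qX ρ ^ a * (qY ρ ^ (b+1) * qZ ρ ^ c)) := by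
  have h1 : qZ ρ ^ c * qY ρ = (ρ⁻¹) ^ c • (qY ρ * qZ ρ ^ c) := powLeftComm (rel_zy ρ hρ) c
  rw [mul_assoc, mul_assoc, h1, mul_smul_comm, mul_smul_comm, ← mul_assoc (qY ρ ^ b),
    ← pow_succ]

lemma mono_mul_Z (a b c : ℕ) :
    (qX ρ ^ a * (qY ρ ^ b * qZ ρ ^ c)) * qZ ρ
      = qX ρ ^ a * (qY ρ ^ b * qZ ρ ^ (c+1)) := by
  rw [mul_assoc, mul_assoc, ← pow_succ]

lemma finite_of_root (hρ : ρ ≠ 0) (k : ℕ) (hk : 0 < k) (h1 : ρ ^ k = 1) :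
    Module.Finite (Subalgebra.center ℂ (QuantumAlg ρ)) (QuantumAlg ρ) := by
  set Z := Subalgebra.center ℂ (QuantumAlg ρ) with hZ
  set f : Fin k × Fin k × Fin k → QuantumAlg ρ :=
    fun p => qX ρ ^ (p.1 : ℕ) * (qY ρ ^ (p.2.1 : ℕ) * qZ ρ ^ (p.2.2 : ℕ)) with hf
  set M : Submodule Z (QuantumAlg ρ) := Submodule.span Z (Set.range f) with hM
  have hfm : ∀ p, f p ∈ M := fun p => Submodule.subset_span ⟨p, rfl⟩
  have hCs : ∀ (r : ℂ) (v : QuantumAlg ρ), v ∈ M → r • v ∈ M := by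
    intro r v hv
    have : r • v = (algebraMap ℂ Z r) • v := (algebraMap_smul _ r v).symm
    rw [this]; exact M.smul_mem _ hv
  -- membership of a monomial with arbitrary exponents a,b,c < k handled; overflow via central powers
  have hmonoX : ∀ (a b c : ℕ), a ≤ k → (b < k) → (c < k) →
      qX ρ ^ a * (qY ρ ^ b * qZ ρ ^ c) ∈ M := by
    intro a b c hak hbk hck
    rcases lt_or_eq_of_le hak with hak' | rfl
    · exact hfm (⟨a, hak'⟩, ⟨b, hbk⟩, ⟨c, hck⟩)
    · have hx := qX_pow_center ρ a h1
      have : qX ρ ^ a * (qY ρ ^ b * qZ ρ ^ c)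
          = (⟨qX ρ ^ a, hx⟩ : Z) • f (⟨0, hk⟩, ⟨b, hbk⟩, ⟨c, hck⟩) := by
        rw [smul_center, hf]; simp [pow_zero, one_mul]
      rw [this]; exact M.smul_mem _ (hfm _)
  have hX : ∀ v ∈ M, v * qX ρ ∈ M := by
    intro v hv
    induction hv using Submodule.span_induction with
    | mem w hw =>
        obtain ⟨⟨a, b, c⟩, rfl⟩ := hw
        rw [hf, mono_mul_X ρ hρ]
        exact hCs _ _ (hmonoX _ _ _ (Nat.succ_le_of_lt a.isLt) b.isLt c.isLt)
    | zero => simpa using M.zero_mem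
    | add u w hu hw h1 h2 => rw [add_mul]; exact M.add_mem h1 h2
    | smul z u hu h2 =>
        have : (z • u) * qX ρ = z • (u * qX ρ) := by
          rcases z with ⟨z, hz⟩; rw [smul_center, smul_center, mul_assoc]
        rw [this]; exact M.smul_mem _ h2
  have hY : ∀ v ∈ M, v * qY ρ ∈ M := by
    intro v hv
    induction hv using Submodule.span_induction with
    | mem w hw =>
        obtain ⟨⟨a, b, c⟩, rfl⟩ := hw
        rw [hf, mono_mul_Y ρ hρ]
        apply hCs
        rcases lt_or_eq_of_le (Nat.succ_le_of_lt b.isLt) with hb' | hb'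
        · exact hfm (a, ⟨(b : ℕ) + 1, hb'⟩, c)
        · have hb2 : (b : ℕ) + 1 = k := hb'
          have hy := qY_pow_center ρ k h1
          have hcomm := Subalgebra.mem_center_iff.mp hy
          have : qX ρ ^ (a : ℕ) * (qY ρ ^ ((b : ℕ)+1) * qZ ρ ^ (c : ℕ))
              = (⟨qY ρ ^ k, hy⟩ : Z) • f (a, ⟨0, hk⟩, c) := by
            rw [smul_center, hf, hb2]
            simp only [pow_zero, one_mul]
            rw [← mul_assoc, hcomm (qX ρ ^ (a : ℕ)), mul_assoc]
          rw [this]; exact M.smul_mem _ (hfm _)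
    | zero => simpa using M.zero_mem
    | add u w hu hw h1 h2 => rw [add_mul]; exact M.add_mem h1 h2
    | smul z u hu h2 =>
        have : (z • u) * qY ρ = z • (u * qY ρ) := by
          rcases z with ⟨z, hz⟩; rw [smul_center, smul_center, mul_assoc]
        rw [this]; exact M.smul_mem _ h2
  have hZ3 : ∀ v ∈ M, v * qZ ρ ∈ M := by
    intro v hv
    induction hv using Submodule.span_induction with
    | mem w hw =>
        obtain ⟨⟨a, b, c⟩, rfl⟩ := hw
        rw [hf, mono_mul_Z ρ]
        rcases lt_or_eq_of_le (Nat.succ_le_of_lt c.isLt) with hc' | hc'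
        · exact hfm (a, b, ⟨(c : ℕ) + 1, hc'⟩)
        · have hc2 : (c : ℕ) + 1 = k := hc'
          have hz := qZ_pow_center ρ k h1
          have hcomm := Subalgebra.mem_center_iff.mp hz
          have : qX ρ ^ (a : ℕ) * (qY ρ ^ (b : ℕ) * qZ ρ ^ ((c : ℕ)+1))
              = (⟨qZ ρ ^ k, hz⟩ : Z) • f (a, b, ⟨0, hk⟩) := by
            rw [smul_center, hf, hc2]
            simp only [pow_zero, mul_one]
            rw [← hcomm (qX ρ ^ (a:ℕ) * qY ρ ^ (b:ℕ)), mul_assoc]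
          rw [this]; exact M.smul_mem _ (hfm _)
    | zero => simpa using M.zero_mem
    | add u w hu hw h1 h2 => rw [add_mul]; exact M.add_mem h1 h2
    | smul z u hu h2 =>
        have : (z • u) * qZ ρ = z • (u * qZ ρ) := by
          rcases z with ⟨z, hz⟩; rw [smul_center, smul_center, mul_assoc]
        rw [this]; exact M.smul_mem _ h2
  have key : ∀ b : QuantumAlg ρ, ∀ v ∈ M, v * b ∈ M := by
    intro b
    have hb : b ∈ Algebra.adjoin ℂ {qX ρ, qY ρ, qZ ρ} := by rw [adjoin_top]; trivial
    induction hb using Algebra.adjoin_induction with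
    | mem s hs =>
        rcases hs with rfl | rfl | rfl
        · exact hX
        · exact hY
        · exact hZ3
    | algebraMap r =>
        intro v hv
        have : v * algebraMap ℂ (QuantumAlg ρ) r = r • v := by
          rw [← Algebra.commutes, ← Algebra.smul_def]
        rw [this]; exact hCs _ _ hv
    | add u w hu hw h1 h2 =>
        intro v hv; rw [mul_add]; exact M.add_mem (h1 v hv) (h2 v hv)
    | mul u w hu hw h1 h2 =>
        intro v hv; rw [← mul_assoc]; exact h2 _ (h1 v hv)
  have hone : (1 : QuantumAlg ρ) ∈ M := by
    have := hfm (⟨0, hk⟩, ⟨0, hk⟩, ⟨0, hk⟩)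
    simpa [hf] using this
  have htop : M = ⊤ := by
    rw [eq_top_iff]
    intro a _
    simpa using key a 1 hone
  exact ⟨by rw [← htop, hM]; exact Submodule.fg_span (Set.finite_range f)⟩
end Backward

section Forward

/-- shift operator on `ℕ →₀ ℂ` -/
noncomputable def shiftOp : Module.End ℂ (ℕ →₀ ℂ) := Finsupp.lmapDomain ℂ ℂ (· + 1)

/-- diagonal operator with eigenvalues `ρ⁻¹ ^ n` -/
noncomputable def diagOp (ρ : ℂ) : Module.End ℂ (ℕ →₀ ℂ) :=
  Finsupp.lsum ℂ (fun n => (ρ⁻¹ ^ n) • Finsupp.lsingle n)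

lemma shiftOp_single (n : ℕ) (c : ℂ) :
    shiftOp (Finsupp.single n c) = Finsupp.single (n+1) c := by
  simp [shiftOp, Finsupp.mapDomain_single]

lemma diagOp_single (ρ : ℂ) (n : ℕ) (c : ℂ) :
    diagOp ρ (Finsupp.single n c) = (ρ⁻¹ ^ n) • Finsupp.single n c := by
  simp [diagOp, Finsupp.lsum_single, Finsupp.smul_single]

lemma diagOp_apply (ρ : ℂ) (g : ℕ →₀ ℂ) (m : ℕ) :
    (diagOp ρ g) m = ρ⁻¹ ^ m * g m := by
  induction g using Finsupp.induction_linear with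
  | zero => simp
  | add u v hu hv => simp [map_add, hu, hv, mul_add]
  | single n c =>
      rw [diagOp_single]
      simp only [Finsupp.smul_apply, Finsupp.single_apply, smul_eq_mul]
      split_ifs with h
      · subst h; rfl
      · simp

lemma shift_diag_rel (ρ : ℂ) (hρ : ρ ≠ 0) :
    shiftOp * diagOp ρ = ρ • (diagOp ρ * shiftOp) := by
  apply Finsupp.lhom_ext
  intro n c
  simp only [Module.End.mul_apply, LinearMap.smul_apply, diagOp_single, shiftOp_single,
    map_smul]
  rw [smul_smul, pow_succ', ← mul_assoc, mul_inv_cancel₀ hρ, one_mul]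

lemma comm_scalar (ρ : ℂ) (hρ : ρ ≠ 0) (hno : ∀ k : ℕ, 0 < k → ρ ^ k ≠ 1)
    (T : Module.End ℂ (ℕ →₀ ℂ))
    (hS : T * shiftOp = shiftOp * T) (hD : T * diagOp ρ = diagOp ρ * T) :
    ∃ d : ℂ, T = d • (1 : Module.End ℂ (ℕ →₀ ℂ)) := by
  have key : ∀ m n : ℕ, m < n → ρ ^ m = ρ ^ n → False := by
    intro m n hmn h'
    have h2 : ρ ^ m * ρ ^ (n - m) = ρ ^ m * 1 := by
      rw [← pow_add, Nat.add_sub_cancel' hmn.le, mul_one, h']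
    exact hno (n - m) (Nat.sub_pos_of_lt hmn) (mul_left_cancel₀ (pow_ne_zero m hρ) h2)
  have hpow : Function.Injective (fun n : ℕ => ρ ^ n) := by
    intro m n h
    simp only at h
    by_contra hne
    rcases Ne.lt_or_gt hne with hmn | hnm
    · exact key m n hmn h
    · exact key n m hnm h.symm
  have hinj : Function.Injective (fun n : ℕ => ρ⁻¹ ^ n) := by
    intro m n h
    simp only at h
    apply hpow
    simp only
    rw [← inv_inv (ρ ^ m), ← inv_inv (ρ ^ n), ← inv_pow ρ m, ← inv_pow ρ n, h]
  set d : ℕ → ℂ := fun n => (T (Finsupp.single n 1)) n with hd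
  have hdiag : ∀ n : ℕ, T (Finsupp.single n 1) = Finsupp.single n (d n) := by
    intro n
    have h2 := congrArg (fun F : Module.End ℂ (ℕ →₀ ℂ) => F (Finsupp.single n 1)) hD
    simp only [Module.End.mul_apply] at h2
    rw [diagOp_single, map_smul] at h2
    have h1 : diagOp ρ (T (Finsupp.single n 1)) = ρ⁻¹ ^ n • T (Finsupp.single n 1) := h2.symm
    ext m
    rw [Finsupp.single_apply]
    split_ifs with h
    · subst h; rfl
    · have h3 := congrArg (fun v : ℕ →₀ ℂ => v m) h1
      simp only [Finsupp.smul_apply, smul_eq_mul, diagOp_apply] at h3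
      by_contra hgm
      exact h (hinj (mul_right_cancel₀ hgm h3)).symm
  have hstep : ∀ n : ℕ, d (n+1) = d n := by
    intro n
    have h2 := congrArg (fun F : Module.End ℂ (ℕ →₀ ℂ) => F (Finsupp.single n 1)) hS
    simp only [Module.End.mul_apply] at h2
    rw [shiftOp_single, hdiag (n+1), hdiag n, shiftOp_single] at h2
    have h3 := congrArg (fun v : ℕ →₀ ℂ => v (n+1)) h2
    simpa using h3
  have hconst : ∀ n, d n = d 0 := by
    intro n; induction n with
    | zero => rfl
    | succ n ih => rw [hstep n, ih]
  refine ⟨d 0, ?_⟩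
  apply Finsupp.lhom_ext
  intro n c
  have h1 : Finsupp.single n c = c • Finsupp.single n (1 : ℂ) := by
    rw [Finsupp.smul_single, smul_eq_mul, mul_one]
  rw [h1, map_smul, map_smul, hdiag n, LinearMap.smul_apply, Module.End.one_apply,
    hconst n, Finsupp.smul_single, Finsupp.smul_single, Finsupp.smul_single]
  rw [smul_eq_mul, smul_eq_mul, smul_eq_mul, mul_one, mul_comm]

set_option maxHeartbeats 1000000 in
lemma root_of_finite (ρ : ℂ) (hρ : ρ ≠ 0)
    (hfin : Module.Finite (Subalgebra.center ℂ (QuantumAlg ρ)) (QuantumAlg ρ)) :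
    ∃ k : ℕ, 0 < k ∧ ρ ^ k = 1 := by
  by_contra hcon
  push_neg at hcon
  have hno : ∀ k : ℕ, 0 < k → ρ ^ k ≠ 1 := hcon
  set F : FreeAlgebra ℂ (Fin 3) →ₐ[ℂ] Module.End ℂ (ℕ →₀ ℂ) :=
    FreeAlgebra.lift ℂ (![shiftOp, diagOp ρ, 0]) with hF
  have hrel : ∀ ⦃x y⦄, QuantumRel ρ x y → F x = F y := by
    intro x y h
    cases h with
    | xy =>
        simp only [map_mul, map_smul, hF, freeGen, FreeAlgebra.lift_ι_apply,
          Matrix.cons_val_zero, Matrix.cons_val_one, Matrix.head_cons]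
        exact shift_diag_rel ρ hρ
    | yz =>
        simp [hF, freeGen, map_mul, map_smul, FreeAlgebra.lift_ι_apply]
    | zx =>
        simp [hF, freeGen, map_mul, map_smul, FreeAlgebra.lift_ι_apply]
  set φ : QuantumAlg ρ →ₐ[ℂ] Module.End ℂ (ℕ →₀ ℂ) :=
    RingQuot.liftAlgHom ℂ ⟨F, hrel⟩ with hφ
  have hXv : φ (qX ρ) = shiftOp := by
    rw [hφ, qX, RingQuot.liftAlgHom_mkAlgHom_apply]
    simp [hF, freeGen, FreeAlgebra.lift_ι_apply]
  have hYv : φ (qY ρ) = diagOp ρ := by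
    rw [hφ, qY, RingQuot.liftAlgHom_mkAlgHom_apply]
    simp [hF, freeGen, FreeAlgebra.lift_ι_apply]
  have hcen : ∀ w : QuantumAlg ρ, w ∈ Subalgebra.center ℂ (QuantumAlg ρ) →
      ∃ dd : ℂ, φ w = dd • (1 : Module.End ℂ (ℕ →₀ ℂ)) := by
    intro w hw
    have hw' := Subalgebra.mem_center_iff.mp hw
    apply comm_scalar ρ hρ hno
    · rw [← hXv, ← map_mul, ← map_mul, hw' (qX ρ)]
    · rw [← hYv, ← map_mul, ← map_mul, hw' (qY ρ)]
  obtain ⟨S, hS⟩ := hfin.fg_top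
  set N : Submodule ℂ (Module.End ℂ (ℕ →₀ ℂ)) :=
    Submodule.span ℂ (⇑φ '' (S : Set (QuantumAlg ρ))) with hN
  have hmem : ∀ a : QuantumAlg ρ, φ a ∈ N := by
    intro a
    have ha : a ∈ Submodule.span (Subalgebra.center ℂ (QuantumAlg ρ)) (S : Set (QuantumAlg ρ)) := by
      rw [hS]; trivial
    induction ha using Submodule.span_induction with
    | mem w hw => exact Submodule.subset_span ⟨w, hw, rfl⟩
    | zero => rw [map_zero]; exact N.zero_mem
    | add u v hu hv h1 h2 => rw [map_add]; exact N.add_mem h1 h2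
    | smul z u hu h2 =>
        obtain ⟨dd, hdd⟩ := hcen z.1 z.2
        have h3 : φ (z • u) = dd • φ u := by
          have hz : (z • u) = z.1 * u := rfl
          rw [hz, map_mul, hdd, smul_mul_assoc, one_mul]
        rw [h3]; exact N.smul_mem _ h2
  have hshift : ∀ n : ℕ, (shiftOp ^ n : Module.End ℂ (ℕ →₀ ℂ)) ∈ N := by
    intro n
    rw [← hXv, ← map_pow]
    exact hmem _
  have hsingle : LinearIndependent ℂ (fun n : ℕ => Finsupp.single n (1:ℂ)) := by
    have := (Finsupp.basisSingleOne (R := ℂ) (ι := ℕ)).linearIndependent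
    simpa [Finsupp.coe_basisSingleOne] using this
  have happly : ∀ n : ℕ, (shiftOp ^ n) (Finsupp.single 0 (1:ℂ)) = Finsupp.single n 1 := by
    intro n; induction n with
    | zero => simp
    | succ n ih => rw [pow_succ', Module.End.mul_apply, ih, shiftOp_single]
  set e : Module.End ℂ (ℕ →₀ ℂ) →ₗ[ℂ] (ℕ →₀ ℂ) :=
    LinearMap.applyₗ (Finsupp.single 0 (1:ℂ)) with he
  set W : Set (Module.End ℂ (ℕ →₀ ℂ)) := ⇑φ '' (S : Set (QuantumAlg ρ)) with hW
  have hw : ∀ n : ℕ, Finsupp.single n (1:ℂ) ∈ Submodule.span ℂ (⇑e '' W) := by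
    intro n
    rw [← Submodule.map_span, ← happly n]
    exact Submodule.mem_map_of_mem (hshift n)
  haveI : Finite ↥(⇑e '' W) :=
    Set.Finite.to_subtype ((S.finite_toSet.image _).image _)
  have hfin : Finite ℕ := by
    apply hsingle.finite_of_le_span_finite _ (⇑e '' W)
    rintro _ ⟨n, rfl⟩
    exact hw n
  exact not_finite ℕ

end Forward


/-- For `ρ ≠ 0`, the quantum affine 3-space `ℂ_ρ[x,y,z]` is a finite module
over its center if and only if `ρ` is a root of unity. -/
theorem finite_over_center_iff (ρ : ℂ) (hρ : ρ ≠ 0) :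
    Module.Finite (Subalgebra.center ℂ (QuantumAlg ρ)) (QuantumAlg ρ) ↔
      ∃ k : ℕ, 0 < k ∧ ρ ^ k = 1 := by
  constructor
  · exact root_of_finite ρ hρ
  · rintro ⟨k, hk, h1⟩
    exact finite_of_root ρ hρ k hk h1
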